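/- Every orientable twist vector is in the orbit of (0,0,0) under the group of affine maps generated by σ₁, σ₂, σ₃: if (a,b,c) ∈ ℤ³, or a, b, c are all half-odd-integers, then there is a finite composition of the maps σ₁, σ₂, σ₃ and their inverses sending (0,0,0) to (a,b,c). (Hint from the paper: σ₁σ₂σ₁·(x,y,z) = (z+1/2, y+1/2, x+1/2), reducing the half-odd-integer case to the integer case.) -/

import Mathlib

/-- The action of a circular braid generator (`b = true`) or its inverse (`b = false`)
on twist vectors in ℚ³. -/
def gen : Fin 3 × Bool → (ℚ × ℚ × ℚ → ℚ × ℚ × ℚ)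
  | (0, true)  => fun v => (v.2.1 + 1/2, v.1 + 1/2, v.2.2 - 1/2)
  | (1, true)  => fun v => (v.1 - 1/2, v.2.2 + 1/2, v.2.1 + 1/2)
  | (2, true)  => fun v => (v.2.2 + 1/2, v.2.1 - 1/2, v.1 + 1/2)
  | (0, false) => fun v => (v.2.1 - 1/2, v.1 - 1/2, v.2.2 + 1/2)
  | (1, false) => fun v => (v.1 + 1/2, v.2.2 - 1/2, v.2.1 - 1/2)
  | (2, false) => fun v => (v.2.2 - 1/2, v.2.1 + 1/2, v.1 - 1/2)

/-- Apply a word (list of generators and inverses, rightmost letter acting first). -/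
def applyWord (w : List (Fin 3 × Bool)) (v : ℚ × ℚ × ℚ) : ℚ × ℚ × ℚ :=
  w.foldr (fun g u => gen g u) v

/-- `x` is an integer. -/
def IsInt (x : ℚ) : Prop := ∃ n : ℤ, x = n

/-- `x` is a half-odd-integer, i.e. an element of ℤ + 1/2. -/
def IsHalfOdd (x : ℚ) : Prop := ∃ n : ℤ, x = n + 1/2

/-- A twist vector is orientable if its entries do not mix integers and
half-odd-integers. -/
def Orientable (v : ℚ × ℚ × ℚ) : Prop :=
  (IsInt v.1 ∧ IsInt v.2.1 ∧ IsInt v.2.2) ∨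
  (IsHalfOdd v.1 ∧ IsHalfOdd v.2.1 ∧ IsHalfOdd v.2.2)

def Reach (v : ℚ × ℚ × ℚ) : Prop := ∃ w : List (Fin 3 × Bool), applyWord w (0,0,0) = v

lemma reach_word (u : List (Fin 3 × Bool)) {v : ℚ×ℚ×ℚ} (h : Reach v) :
    Reach (applyWord u v) := by
  obtain ⟨w, hw⟩ := h
  exact ⟨u ++ w, by simp [applyWord, List.foldr_append] at *; rw [hw]⟩

lemma reach_x2 {v : ℚ×ℚ×ℚ} (h : Reach v) : Reach (v.1 + 2, v.2.1, v.2.2) := by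
  have := reach_word [(2,true),(2,true),(0,true),(0,true)] h
  simp only [applyWord, List.foldr, gen] at this
  convert this using 1
  simp [Prod.ext_iff]
  ring

lemma reach_x2' {v : ℚ×ℚ×ℚ} (h : Reach v) : Reach (v.1 - 2, v.2.1, v.2.2) := by
  have := reach_word [(2,false),(2,false),(0,false),(0,false)] h
  simp only [applyWord, List.foldr, gen] at this
  convert this using 1
  simp [Prod.ext_iff]
  ring

lemma reach_y2 {v : ℚ×ℚ×ℚ} (h : Reach v) : Reach (v.1, v.2.1 + 2, v.2.2) := by
  have := reach_word [(1,true),(1,true),(0,true),(0,true)] h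
  simp only [applyWord, List.foldr, gen] at this
  convert this using 1
  simp [Prod.ext_iff]
  ring

lemma reach_y2' {v : ℚ×ℚ×ℚ} (h : Reach v) : Reach (v.1, v.2.1 - 2, v.2.2) := by
  have := reach_word [(1,false),(1,false),(0,false),(0,false)] h
  simp only [applyWord, List.foldr, gen] at this
  convert this using 1
  simp [Prod.ext_iff]
  ring

lemma reach_z2 {v : ℚ×ℚ×ℚ} (h : Reach v) : Reach (v.1, v.2.1, v.2.2 + 2) := by
  have := reach_word [(2,true),(2,true),(1,true),(1,true)] h
  simp only [applyWord, List.foldr, gen] at this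
  convert this using 1
  simp [Prod.ext_iff]
  ring

lemma reach_z2' {v : ℚ×ℚ×ℚ} (h : Reach v) : Reach (v.1, v.2.1, v.2.2 - 2) := by
  have := reach_word [(2,false),(2,false),(1,false),(1,false)] h
  simp only [applyWord, List.foldr, gen] at this
  convert this using 1
  simp [Prod.ext_iff]
  ring

lemma reach_mx (x : ℤ) {v : ℚ×ℚ×ℚ} (h : Reach v) : Reach (v.1 + 2*x, v.2.1, v.2.2) := by
  induction x using Int.induction_on with
  | zero => simpa using h
  | succ n ih => have := reach_x2 ih; push_cast at *; convert this using 2 <;> ring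
  | pred n ih => have := reach_x2' ih; push_cast at *; convert this using 2 <;> ring

lemma reach_my (y : ℤ) {v : ℚ×ℚ×ℚ} (h : Reach v) : Reach (v.1, v.2.1 + 2*y, v.2.2) := by
  induction y using Int.induction_on with
  | zero => simpa using h
  | succ n ih => have := reach_y2 ih; push_cast at *; convert this using 2; · ring_nf
  | pred n ih => have := reach_y2' ih; push_cast at *; convert this using 2; · ring_nf

lemma reach_mz (z : ℤ) {v : ℚ×ℚ×ℚ} (h : Reach v) : Reach (v.1, v.2.1, v.2.2 + 2*z) := by
  induction z using Int.induction_on with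
  | zero => simpa using h
  | succ n ih => have := reach_z2 ih; push_cast at *; convert this using 2; · ring_nf
  | pred n ih => have := reach_z2' ih; push_cast at *; convert this using 2; · ring_nf

lemma reach_shift (x y z : ℤ) {v : ℚ×ℚ×ℚ} (h : Reach v) :
    Reach (v.1 + 2*x, v.2.1 + 2*y, v.2.2 + 2*z) := by
  have := reach_mz z (reach_my y (reach_mx x h))
  simpa using this

lemma reach_of_base {B : ℚ×ℚ×ℚ} (hB : Reach B) (x y z : ℤ) (a b c : ℚ)
    (ha : a = B.1 + 2*x) (hb : b = B.2.1 + 2*y) (hc : c = B.2.2 + 2*z) :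
    Reach (a, b, c) := by
  subst ha hb hc
  exact reach_shift x y z hB

lemma base000 : Reach ((0:ℚ), (0:ℚ), (0:ℚ)) := ⟨[], rfl⟩

lemma base110 : Reach ((1:ℚ), (-1:ℚ), (0:ℚ)) :=
  ⟨[(1,false),(0,true)], by norm_num [applyWord, gen]⟩

lemma base011 : Reach ((0:ℚ), (-1:ℚ), (1:ℚ)) :=
  ⟨[(0,false),(1,true)], by norm_num [applyWord, gen]⟩

lemma base101 : Reach ((1:ℚ), (0:ℚ), (-1:ℚ)) :=
  ⟨[(1,false),(2,true)], by norm_num [applyWord, gen]⟩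

lemma base111 : Reach ((1:ℚ), (1:ℚ), (1:ℚ)) :=
  ⟨[(0,true),(1,true),(0,true),(0,true),(1,true),(0,true)],
    by norm_num [applyWord, gen]⟩

lemma base001 : Reach ((2:ℚ), (0:ℚ), (1:ℚ)) :=
  ⟨[(0,true),(1,true),(0,true),(0,true),(1,true),(0,true),(1,false),(0,true)],
    by norm_num [applyWord, gen]⟩

lemma base100 : Reach ((1:ℚ), (0:ℚ), (2:ℚ)) :=
  ⟨[(0,true),(1,true),(0,true),(0,true),(1,true),(0,true),(0,false),(1,true)],
    by norm_num [applyWord, gen]⟩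

lemma base010 : Reach ((2:ℚ), (1:ℚ), (0:ℚ)) :=
  ⟨[(0,true),(1,true),(0,true),(0,true),(1,true),(0,true),(1,false),(2,true)],
    by norm_num [applyWord, gen]⟩

lemma reach_int (a b c : ℤ) : Reach ((a : ℚ), (b : ℚ), (c : ℚ)) := by
  obtain ⟨p, hp⟩ | ⟨p, hp⟩ := Int.even_or_odd a <;>
  obtain ⟨q, hq⟩ | ⟨q, hq⟩ := Int.even_or_odd b <;>
  obtain ⟨r, hr⟩ | ⟨r, hr⟩ := Int.even_or_odd c
  · exact reach_of_base base000 p q r _ _ _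
      (by push_cast [hp]; ring) (by push_cast [hq]; ring) (by push_cast [hr]; ring)
  · exact reach_of_base base001 (p-1) q r _ _ _
      (by push_cast [hp]; ring) (by push_cast [hq]; ring) (by push_cast [hr]; ring)
  · exact reach_of_base base010 (p-1) q r _ _ _
      (by push_cast [hp]; ring) (by push_cast [hq]; ring) (by push_cast [hr]; ring)
  · exact reach_of_base base011 p (q+1) r _ _ _
      (by push_cast [hp]; ring) (by push_cast [hq]; ring) (by push_cast [hr]; ring)
  · exact reach_of_base base100 p q (r-1) _ _ _
      (by push_cast [hp]; ring) (by push_cast [hq]; ring) (by push_cast [hr]; ring)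
  · exact reach_of_base base101 p q (r+1) _ _ _
      (by push_cast [hp]; ring) (by push_cast [hq]; ring) (by push_cast [hr]; ring)
  · exact reach_of_base base110 p (q+1) r _ _ _
      (by push_cast [hp]; ring) (by push_cast [hq]; ring) (by push_cast [hr]; ring)
  · exact reach_of_base base111 p q r _ _ _
      (by push_cast [hp]; ring) (by push_cast [hq]; ring) (by push_cast [hr]; ring)

lemma reach_half (a b c : ℤ) :
    Reach ((a : ℚ) + 1/2, (b : ℚ) + 1/2, (c : ℚ) + 1/2) := by
  have h := reach_word [(0,true),(1,true),(0,true)] (reach_int c b a)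
  simp only [applyWord, List.foldr, gen] at h
  convert h using 1
  simp [Prod.ext_iff]

theorem orientable_twist_vectors_reachable (v : ℚ × ℚ × ℚ) (h : Orientable v) :
    ∃ w : List (Fin 3 × Bool), applyWord w (0, 0, 0) = v := by
  obtain ⟨x, y, z⟩ := v
  rcases h with ⟨⟨n, hn⟩, ⟨m, hm⟩, ⟨k, hk⟩⟩ | ⟨⟨n, hn⟩, ⟨m, hm⟩, ⟨k, hk⟩⟩
  · subst hn hm hk
    exact reach_int n m k
  · subst hn hm hk
    exact reach_half n m k
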